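/- Let X ⊆ ℝ^d be a measurable set and let T be a measurable kernel on (0,∞) × X × X satisfying: (i) 0 ≤ T_t(x,y) ≤ C₀ t^ν (t + |x−y|²)^{−d/2−ν} for some C₀ > 0, ν ∈ (0,1); (ii) for every g ∈ L²(X), T_t g → g in L²(X) as t → 0⁺. Then for every f ∈ L¹(X) + L^∞(X) there exists a sequence t_n → 0⁺ such that T_{t_n} f(x) → f(x) for almost every x ∈ X. -/

import Mathlib

open MeasureTheory Set Metric Filter
open scoped ENNReal NNReal

noncomputable section

/-- `ℝ^d` with the Euclidean structure and the Lebesgue measure. -/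
abbrev Rd (d : ℕ) := EuclideanSpace ℝ (Fin d)

/-- The cuboid `Q(z, r₁, …, r_d)`, always taken as a subset of `X`. -/
def cuboid {d : ℕ} (X : Set (Rd d)) (z : Rd d) (r : Fin d → ℝ) : Set (Rd d) :=
  {x ∈ X | ∀ i, |x i - z i| ≤ r i}

/-- The `k`-fold enlargement `Q^{*⋯*}` of the cuboid, with enlargement parameter `κ`
(`k = 1` is `Q^*`, `k = 2` is `Q^{**}`, `k = 3` is `Q^{***}`). -/
def cuboidSt {d : ℕ} (X : Set (Rd d)) (z : Rd d) (r : Fin d → ℝ) (κ : ℝ) (k : ℕ) :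
    Set (Rd d) :=
  cuboid X z fun i => κ ^ k * r i

/-- The classical heat kernel `H_t(x,y) = (4πt)^{-d/2} exp(-|x-y|²/(4t))` on `ℝ^d`. -/
def heatK (d : ℕ) (t : ℝ) (x y : Rd d) : ℝ :=
  (4 * Real.pi * t) ^ (-(d : ℝ) / 2) * Real.exp (-dist x y ^ 2 / (4 * t))

lemma bc1 {α : Type*} [MeasurableSpace α] {μ : Measure α} (u : ℕ → α → ℝ)
    (hu : ∀ n, AEMeasurable (u n) μ) (h : ∑' n, ∫⁻ x, ‖u n x‖₊ ∂μ ≠ ∞) :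
    ∀ᵐ x ∂μ, Tendsto (fun n => u n x) atTop (nhds 0) := by
  have h1 : ∫⁻ x, ∑' n, (‖u n x‖₊ : ℝ≥0∞) ∂μ ≠ ∞ := by
    rw [lintegral_tsum fun n => (hu n).nnnorm.coe_nnreal_ennreal]; exact h
  have h2 : ∀ᵐ x ∂μ, ∑' n, (‖u n x‖₊ : ℝ≥0∞) ≠ ∞ :=
    ae_lt_top' (AEMeasurable.ennreal_tsum fun n => (hu n).nnnorm.coe_nnreal_ennreal) h1 |>.mono fun x hx => hx.ne
  filter_upwards [h2] with x hx
  have h3 := ENNReal.tendsto_atTop_zero_of_tsum_ne_top hx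
  rw [tendsto_zero_iff_norm_tendsto_zero]
  have h4 : Tendsto (fun n => (‖u n x‖₊ : ℝ≥0)) atTop (nhds 0) := ENNReal.tendsto_coe.mp h3
  exact NNReal.tendsto_coe.mpr h4

lemma bc2 {α : Type*} [MeasurableSpace α] {μ : Measure α} (v : ℕ → α → ℝ)
    (hv : ∀ n, AEMeasurable (v n) μ)
    (h : ∑' n, ∫⁻ x, (‖v n x‖₊ : ℝ≥0∞) ^ (2:ℝ) ∂μ ≠ ∞) :
    ∀ᵐ x ∂μ, Tendsto (fun n => v n x) atTop (nhds 0) := by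
  have heq : ∀ n x, (‖(v n x)^2‖₊ : ℝ≥0∞) = (‖v n x‖₊ : ℝ≥0∞) ^ (2:ℝ) := by
    intro n x
    have : ((‖v n x‖₊ : ℝ≥0∞) ^ (2:ℝ)) = (‖v n x‖₊ : ℝ≥0∞) ^ (2:ℕ) := by
      rw [← ENNReal.rpow_natCast]; norm_num
    rw [this, ← ENNReal.coe_pow]
    norm_cast
    simp [pow_two, nnnorm_mul]
  have key : ∀ᵐ x ∂μ, Tendsto (fun n => (v n x) ^ 2) atTop (nhds 0) := by
    apply bc1 (fun n x => (v n x) ^ 2) (fun n => ((hv n).pow_const 2))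
    simp_rw [heq]; exact h
  filter_upwards [key] with x hx
  have := (Real.continuous_sqrt.tendsto' 0 0 Real.sqrt_zero).comp hx
  simp only [Function.comp_def, Real.sqrt_sq_eq_abs] at this
  rw [tendsto_zero_iff_norm_tendsto_zero]
  simpa [Real.norm_eq_abs] using this

variable {d : ℕ}

lemma finrank_Rd : Module.finrank ℝ (Rd d) = d := finrank_euclideanSpace_fin

lemma jb_int {s : ℝ} (hs : (d:ℝ) < 2*s) :
    Integrable (fun u : Rd d => (1 + ‖u‖^2) ^ (-s)) := by
  have h := integrable_rpow_neg_one_add_norm_sq (E := Rd d) (μ := volume) (r := 2*s)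
    (by rw [finrank_Rd]; exact hs)
  have : ∀ u : Rd d, ((1:ℝ) + ‖u‖^2) ^ (-(2*s)/2) = (1 + ‖u‖^2) ^ (-s) := by
    intro u; congr 1; ring
  simpa [this] using h

lemma base_int {s : ℝ} (hs : (d:ℝ) < 2*s) (hs0 : 0 < s) {t : ℝ} (ht : 0 < t) :
    Integrable (fun u : Rd d => (t + ‖u‖^2) ^ (-s)) := by
  refine ((jb_int hs).const_mul ((min t 1) ^ (-s))).mono' ?_ (Eventually.of_forall fun u => ?_)
  · exact (by fun_prop : Measurable fun u : Rd d => (t + ‖u‖^2) ^ (-s)).aestronglyMeasurable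
  · have h1 : (0:ℝ) < t + ‖u‖^2 := by positivity
    rw [Real.norm_eq_abs, abs_of_nonneg (Real.rpow_nonneg h1.le _)]
    have h2 : min t 1 * (1 + ‖u‖^2) ≤ t + ‖u‖^2 := by
      rcases min_le_iff.mpr (Or.inl (le_refl t)) with _
      have hm1 : min t 1 ≤ t := min_le_left _ _
      have hm2 : min t 1 ≤ 1 := min_le_right _ _
      have hm0 : 0 < min t 1 := lt_min ht one_pos
      nlinarith [sq_nonneg ‖u‖, norm_nonneg u]
    have h3 : (t + ‖u‖^2) ^ (-s) ≤ (min t 1 * (1 + ‖u‖^2)) ^ (-s) := by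
      apply Real.rpow_le_rpow_of_nonpos (by positivity) h2 (by linarith)
    calc (t + ‖u‖^2) ^ (-s) ≤ (min t 1 * (1 + ‖u‖^2)) ^ (-s) := h3
      _ = (min t 1) ^ (-s) * (1 + ‖u‖^2) ^ (-s) := by
          rw [Real.mul_rpow (le_of_lt (lt_min ht one_pos)) (by positivity)]

lemma base_scale {s ν : ℝ} (hsν : s = (d:ℝ)/2 + ν) {t : ℝ} (ht : 0 < t) :
    ∫ u : Rd d, (t + ‖u‖^2) ^ (-s) = t ^ (-ν) * ∫ u : Rd d, (1 + ‖u‖^2) ^ (-s) := by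
  have key := Measure.integral_comp_smul (μ := (volume : Measure (Rd d)))
    (f := fun u : Rd d => (t + ‖u‖^2) ^ (-s)) (Real.sqrt t)
  have h1 : ∀ u : Rd d, (t + ‖Real.sqrt t • u‖^2) ^ (-s) = t^(-s) * (1 + ‖u‖^2) ^ (-s) := by
    intro u
    have : ‖Real.sqrt t • u‖^2 = t * ‖u‖^2 := by
      rw [norm_smul, Real.norm_eq_abs, abs_of_nonneg (Real.sqrt_nonneg t), mul_pow,
        Real.sq_sqrt ht.le]
    rw [this, show t + t * ‖u‖^2 = t * (1 + ‖u‖^2) by ring,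
      Real.mul_rpow ht.le (by positivity)]
  simp_rw [h1] at key
  rw [integral_const_mul] at key
  have h2 : (Real.sqrt t ^ Module.finrank ℝ (Rd d) : ℝ) = t ^ ((d:ℝ)/2) := by
    rw [finrank_Rd, ← Real.rpow_natCast (Real.sqrt t) d, Real.sqrt_eq_rpow,
      ← Real.rpow_mul ht.le]
    congr 1; ring
  rw [h2] at key
  have h3 : |(t ^ ((d:ℝ)/2))⁻¹| = t ^ (-((d:ℝ)/2)) := by
    rw [abs_of_nonneg (by positivity), ← Real.rpow_neg ht.le]
  rw [h3, smul_eq_mul] at key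
  have e : ∫ (x : Rd d), (t + ‖x‖ ^ 2) ^ (-s)
      = t ^ ((d:ℝ)/2) * (t ^ (-((d:ℝ)/2)) * ∫ (x : Rd d), (t + ‖x‖ ^ 2) ^ (-s)) := by
    rw [← mul_assoc, ← Real.rpow_add ht, add_neg_cancel, Real.rpow_zero, one_mul]
  rw [e, ← key, ← mul_assoc, ← Real.rpow_add ht]
  congr 2
  rw [hsν]; ring

def Hfun (d : ℕ) (s : ℝ) : Rd d → ℝ := fun u => if 1 ≤ ‖u‖ then ‖u‖ ^ (-(2*s)) else 0

lemma Hfun_meas {s : ℝ} : Measurable (Hfun d s) := by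
  unfold Hfun
  exact Measurable.ite (measurableSet_le measurable_const measurable_norm)
    (by fun_prop) measurable_const

lemma Hfun_nonneg {s : ℝ} (u : Rd d) : 0 ≤ Hfun d s u := by
  unfold Hfun
  split
  · exact Real.rpow_nonneg (norm_nonneg u) _
  · exact le_refl 0

lemma Hfun_int {s : ℝ} (hs : (d:ℝ) < 2*s) (hs0 : 0 < s) : Integrable (Hfun d s) := by
  refine ((jb_int hs).const_mul ((2:ℝ) ^ s)).mono' Hfun_meas.aestronglyMeasurable
    (Eventually.of_forall fun u => ?_)
  rw [Real.norm_eq_abs, abs_of_nonneg (Hfun_nonneg u)]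
  unfold Hfun
  split
  · next h1 =>
    have hu : (0:ℝ) < ‖u‖ := lt_of_lt_of_le one_pos h1
    have e1 : ‖u‖ ^ (-(2*s)) = (‖u‖^2) ^ (-s) := by
      rw [← Real.rpow_natCast ‖u‖ 2, ← Real.rpow_mul (norm_nonneg u)]
      congr 1; ring
    have h2 : (1:ℝ) + ‖u‖^2 ≤ 2 * ‖u‖^2 := by nlinarith
    have h3 : ((2:ℝ) * ‖u‖^2) ^ (-s) ≤ (1 + ‖u‖^2) ^ (-s) :=
      Real.rpow_le_rpow_of_nonpos (by positivity) h2 (by linarith)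
    have h4 : ((2:ℝ) * ‖u‖^2) ^ (-s) = 2 ^ (-s) * (‖u‖^2) ^ (-s) :=
      Real.mul_rpow (by norm_num) (by positivity)
    rw [e1]
    have h5 : (‖u‖^2:ℝ) ^ (-s) = 2 ^ s * (2 ^ (-s) * (‖u‖^2) ^ (-s)) := by
      rw [← mul_assoc, ← Real.rpow_add (by norm_num : (0:ℝ) < 2), add_neg_cancel,
        Real.rpow_zero, one_mul]
    rw [h5]
    exact mul_le_mul_of_nonneg_left (h4 ▸ h3) (Real.rpow_nonneg (by norm_num) s)
  · positivity

lemma Hfun_ge {s : ℝ} (hs0 : 0 < s) {t : ℝ} (ht : 0 < t) {x y : Rd d} (h : 1 ≤ dist x y) :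
    (t + dist x y ^ 2) ^ (-s) ≤ Hfun d s (y - x) := by
  have hd : ‖y - x‖ = dist x y := by rw [← dist_eq_norm]; exact dist_comm y x
  unfold Hfun
  rw [if_pos (by rw [hd]; exact h), hd]
  have e1 : dist x y ^ (-(2*s)) = (dist x y ^2) ^ (-s) := by
    rw [← Real.rpow_natCast (dist x y) 2, ← Real.rpow_mul dist_nonneg]
    congr 1; ring
  rw [e1]
  have hD : (0:ℝ) < dist x y ^ 2 := by nlinarith
  exact Real.rpow_le_rpow_of_nonpos hD (by linarith) (by linarith)

lemma shift_int {s : ℝ} (hs : (d:ℝ) < 2*s) (hs0 : 0 < s) {t : ℝ} (ht : 0 < t) (x : Rd d) :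
    Integrable (fun y : Rd d => (t + ‖y - x‖^2) ^ (-s)) :=
  (base_int hs hs0 ht).comp_sub_right x

lemma shift_integral {s t : ℝ} (x : Rd d) :
    ∫ y : Rd d, (t + ‖y - x‖^2) ^ (-s) = ∫ u : Rd d, (t + ‖u‖^2) ^ (-s) :=
  integral_sub_right_eq_self (fun u : Rd d => (t + ‖u‖^2) ^ (-s)) x

lemma Hshift_int {s : ℝ} (hs : (d:ℝ) < 2*s) (hs0 : 0 < s) (x : Rd d) :
    Integrable (fun y : Rd d => Hfun d s (y - x)) :=
  (Hfun_int hs hs0).comp_sub_right x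

lemma Hshift_integral {s : ℝ} (x : Rd d) :
    ∫ y : Rd d, Hfun d s (y - x) = ∫ u : Rd d, Hfun d s u :=
  integral_sub_right_eq_self (Hfun d s) x

lemma lint_sq_le {α : Type*} [MeasurableSpace α] {μ : Measure α} {v : α → ℝ} {δ : ℝ≥0∞}
    (h : eLpNorm v 2 μ ≤ δ) : ∫⁻ x, (‖v x‖₊ : ℝ≥0∞) ^ (2:ℝ) ∂μ ≤ δ ^ (2:ℝ) := by
  rw [eLpNorm_eq_lintegral_rpow_enorm_toReal (by norm_num) (by norm_num)] at h
  simp only [ENNReal.toReal_ofNat] at h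
  have h2 := ENNReal.rpow_le_rpow h (by norm_num : (0:ℝ) ≤ 2)
  rwa [← ENNReal.rpow_mul, one_div, inv_mul_cancel₀ (by norm_num : (2:ℝ) ≠ 0),
    ENNReal.rpow_one] at h2

def trunc (c v : ℝ) : ℝ := max (-c) (min v c)

lemma trunc_meas {α : Type*} [MeasurableSpace α] {f : α → ℝ} (hf : Measurable f) (c : ℝ) :
    Measurable fun x => trunc c (f x) :=
  measurable_const.max (hf.min measurable_const)

lemma trunc_abs_le_abs (c v : ℝ) (hc : 0 ≤ c) : |trunc c v| ≤ |v| := by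
  unfold trunc
  rcases le_total 0 v with h | h
  · rw [abs_of_nonneg h, abs_of_nonneg (le_max_of_le_right (le_min h hc))]
    exact max_le (by linarith [abs_nonneg v]) (min_le_left _ _)
  · rw [abs_of_nonpos h, abs_of_nonpos (max_le (by linarith) (min_le_of_left_le h))]
    have hv : v ≤ max (-c) (min v c) := by
      rcases le_total v (-c) with h2 | h2
      · exact h2.trans (le_max_left _ _)
      · exact le_max_of_le_right (le_min (le_refl v) (h.trans hc))
    linarith

lemma trunc_abs_le (c v : ℝ) (hc : 0 ≤ c) : |trunc c v| ≤ c := by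
  unfold trunc
  rw [abs_le]
  exact ⟨le_max_left _ _, max_le (by linarith) (min_le_right _ _)⟩

lemma trunc_eq_self {c v : ℝ} (h : |v| ≤ c) : trunc c v = v := by
  rw [abs_le] at h
  unfold trunc
  rw [min_eq_left h.2, max_eq_right h.1]

set_option maxHeartbeats 1000000 in
theorem key {d : ℕ} {X : Set (Rd d)} (hXmeas : MeasurableSet X)
    (T : ℝ → Rd d → Rd d → ℝ)
    (hTmeas : Measurable fun p : ℝ × Rd d × Rd d => T p.1 p.2.1 p.2.2)
    (C₀ ν : ℝ) (hC₀ : 0 < C₀) (hν : ν ∈ Set.Ioo (0 : ℝ) 1)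
    (hA0 : ∀ t > 0, ∀ x ∈ X, ∀ y ∈ X,
      0 ≤ T t x y ∧ T t x y ≤ C₀ * t ^ ν * (t + dist x y ^ 2) ^ (-(d : ℝ) / 2 - ν))
    (hcont : ∀ g : Rd d → ℝ, MemLp g 2 (volume.restrict X) →
      Tendsto (fun t => eLpNorm (fun x => (∫ y in X, T t x y * g y) - g x) 2
          (volume.restrict X))
        (nhdsWithin 0 (Set.Ioi 0)) (nhds 0))
    (f₁ f₂ : Rd d → ℝ) (hm₁ : Measurable f₁) (hm₂ : Measurable f₂)
    (hf₁ : IntegrableOn f₁ X volume) (M : ℝ) (hM0 : 0 ≤ M) (hM : ∀ x, |f₂ x| ≤ M) :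
    ∃ tseq : ℕ → ℝ, (∀ n, 0 < tseq n) ∧ Tendsto tseq atTop (nhds 0) ∧
      ∀ᵐ x ∂volume.restrict X,
        Tendsto (fun n => ∫ y in X, T (tseq n) x y * (f₁ + f₂) y) atTop
          (nhds ((f₁ + f₂) x)) := by
  obtain ⟨hν0, hν1⟩ := hν
  set s : ℝ := (d:ℝ)/2 + ν with hsdef
  have hs0 : 0 < s := by positivity
  have hs2 : (d:ℝ) < 2*s := by rw [hsdef]; push_cast; linarith
  set K : ℝ := ∫ u : Rd d, (1 + ‖u‖^2) ^ (-s) with hKdef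
  have hK0 : 0 ≤ K := integral_nonneg fun u => Real.rpow_nonneg (by positivity) _
  set c₁ : ℝ := ∫ u : Rd d, Hfun d s u with hc₁def
  have hc₁0 : 0 ≤ c₁ := integral_nonneg Hfun_nonneg
  -- measurability of sections of the kernel
  have hTm : ∀ (t : ℝ) (x : Rd d), Measurable fun y => T t x y := fun t x =>
    hTmeas.comp (measurable_const.prodMk (measurable_const.prodMk measurable_id))
  have hTmx : ∀ (t : ℝ) (y : Rd d), Measurable fun x => T t x y := fun t y =>
    hTmeas.comp (measurable_const.prodMk (measurable_id.prodMk measurable_const))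
  have hTm2 : ∀ t : ℝ, Measurable fun p : Rd d × Rd d => T t p.1 p.2 := fun t =>
    hTmeas.comp (measurable_const.prodMk measurable_id)
  -- the (A₀′) bound, rewritten
  have hA0' : ∀ t, 0 < t → ∀ x ∈ X, ∀ y ∈ X,
      0 ≤ T t x y ∧ T t x y ≤ C₀ * t ^ ν * (t + ‖y - x‖ ^ 2) ^ (-s) := by
    intro t ht x hx y hy
    have h := hA0 t ht x hx y hy
    have e1 : dist x y = ‖y - x‖ := by rw [dist_eq_norm, norm_sub_rev]
    have e2 : -(d:ℝ)/2 - ν = -s := by rw [hsdef]; ring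
    rw [e1, e2] at h
    exact h
  -- kernel is integrable in `y` over `X`, with uniform bound C₀ * K
  have hker_int : ∀ t, 0 < t → ∀ x ∈ X, IntegrableOn (fun y => T t x y) X volume := by
    intro t ht x hx
    refine Integrable.mono' (((shift_int hs2 hs0 ht x).const_mul
      (C₀ * t ^ ν)).integrableOn) ((hTm t x).aestronglyMeasurable) ?_
    rw [ae_restrict_iff' hXmeas]
    refine ae_of_all _ fun y hy => ?_
    obtain ⟨h0, h1⟩ := hA0' t ht x hx y hy
    rw [Real.norm_eq_abs, abs_of_nonneg h0]
    exact h1.trans (le_of_eq (by ring))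
  have hker_bound : ∀ t, 0 < t → ∀ x ∈ X, ∫ y in X, T t x y ≤ C₀ * K := by
    intro t ht x hx
    have step1 : ∫ y in X, T t x y ≤ ∫ y in X, C₀ * t ^ ν * (t + ‖y - x‖ ^ 2) ^ (-s) := by
      refine setIntegral_mono_on (hker_int t ht x hx)
        (((shift_int hs2 hs0 ht x).const_mul (C₀ * t ^ ν)).integrableOn) hXmeas
        fun y hy => (hA0' t ht x hx y hy).2
    have step2 : ∫ y in X, C₀ * t ^ ν * (t + ‖y - x‖ ^ 2) ^ (-s)
        ≤ ∫ y : Rd d, C₀ * t ^ ν * (t + ‖y - x‖ ^ 2) ^ (-s) := by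
      refine setIntegral_le_integral ((shift_int hs2 hs0 ht x).const_mul (C₀ * t ^ ν)) ?_
      exact ae_of_all _ fun y => by positivity
    have step3 : ∫ y : Rd d, C₀ * t ^ ν * (t + ‖y - x‖ ^ 2) ^ (-s) = C₀ * K := by
      rw [integral_const_mul, shift_integral x, base_scale hsdef ht, ← mul_assoc,
        mul_assoc C₀, ← Real.rpow_add ht, add_neg_cancel, Real.rpow_zero, mul_one, hKdef]
    linarith
  -- same in the `x` variable
  have hker_intx : ∀ t, 0 < t → ∀ y ∈ X, IntegrableOn (fun x => T t x y) X volume := by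
    intro t ht y hy
    refine Integrable.mono' (((shift_int hs2 hs0 ht y).const_mul
      (C₀ * t ^ ν)).integrableOn) ((hTmx t y).aestronglyMeasurable) ?_
    rw [ae_restrict_iff' hXmeas]
    refine ae_of_all _ fun x hx => ?_
    obtain ⟨h0, h1⟩ := hA0' t ht x hx y hy
    rw [Real.norm_eq_abs, abs_of_nonneg h0, norm_sub_rev]
    exact h1.trans (le_of_eq (by ring))
  have hker_boundx : ∀ t, 0 < t → ∀ y ∈ X, ∫ x in X, T t x y ≤ C₀ * K := by
    intro t ht y hy
    have step1 : ∫ x in X, T t x y ≤ ∫ x in X, C₀ * t ^ ν * (t + ‖x - y‖ ^ 2) ^ (-s) := by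
      refine setIntegral_mono_on (hker_intx t ht y hy)
        (((shift_int hs2 hs0 ht y).const_mul (C₀ * t ^ ν)).integrableOn) hXmeas
        fun x hx => ?_
      have := (hA0' t ht x hx y hy).2
      rwa [norm_sub_rev] at this
    have step2 : ∫ x in X, C₀ * t ^ ν * (t + ‖x - y‖ ^ 2) ^ (-s)
        ≤ ∫ x : Rd d, C₀ * t ^ ν * (t + ‖x - y‖ ^ 2) ^ (-s) := by
      refine setIntegral_le_integral ((shift_int hs2 hs0 ht y).const_mul (C₀ * t ^ ν)) ?_
      exact ae_of_all _ fun x => by positivity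
    have step3 : ∫ x : Rd d, C₀ * t ^ ν * (t + ‖x - y‖ ^ 2) ^ (-s) = C₀ * K := by
      rw [integral_const_mul, shift_integral y, base_scale hsdef ht, ← mul_assoc,
        mul_assoc C₀, ← Real.rpow_add ht, add_neg_cancel, Real.rpow_zero, mul_one, hKdef]
    linarith
  -- integrability of T t x · * g for bounded measurable g
  have hbint : ∀ t, 0 < t → ∀ x ∈ X, ∀ (g : Rd d → ℝ) (c : ℝ), Measurable g →
      (∀ y, |g y| ≤ c) → IntegrableOn (fun y => T t x y * g y) X volume := by
    intro t ht x hx g c hg hgc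
    refine Integrable.mono' ((hker_int t ht x hx).const_mul c)
      ((hTm t x).mul hg).aestronglyMeasurable ?_
    rw [ae_restrict_iff' hXmeas]
    refine ae_of_all _ fun y hy => ?_
    have h0 := (hA0' t ht x hx y hy).1
    rw [Real.norm_eq_abs, abs_mul, abs_of_nonneg h0]
    calc T t x y * |g y| ≤ T t x y * c := by
          have hc : 0 ≤ c := le_trans (abs_nonneg _) (hgc y)
          exact mul_le_mul_of_nonneg_left (hgc y) h0
      _ = c * T t x y := by ring
  -- measurability of x ↦ ∫ y in X, T t x y * g y
  have hIm : ∀ (t : ℝ) (g : Rd d → ℝ), Measurable g →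
      StronglyMeasurable fun x => ∫ y in X, T t x y * g y := by
    intro t g hg
    exact StronglyMeasurable.integral_prod_right'
      (f := fun p : Rd d × Rd d => T t p.1 p.2 * g p.2)
      ((hTm2 t).mul (hg.comp measurable_snd)).stronglyMeasurable
  -- Tonelli: L¹-type bound
  have hL1 : ∀ t, 0 < t → ∀ g : Rd d → ℝ, Measurable g → IntegrableOn g X volume →
      (∀ᵐ x ∂volume.restrict X, IntegrableOn (fun y => T t x y * g y) X volume) ∧
      ∫⁻ x in X, (‖∫ y in X, T t x y * g y‖₊ : ℝ≥0∞)
        ≤ ENNReal.ofReal (C₀ * K) * ∫⁻ y in X, (‖g y‖₊ : ℝ≥0∞) := by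
    intro t ht g hg hgint
    have hFm : AEMeasurable (Function.uncurry fun x y => ((‖T t x y * g y‖₊ : ℝ≥0∞)))
        ((volume.restrict X).prod (volume.restrict X)) := by
      exact (((hTm2 t).mul (hg.comp measurable_snd)).nnnorm.coe_nnreal_ennreal).aemeasurable
    have hinner : ∀ y ∈ X, ∫⁻ x in X, (‖T t x y‖₊ : ℝ≥0∞) ≤ ENNReal.ofReal (C₀ * K) := by
      intro y hy
      have e1 : ∫⁻ x in X, (‖T t x y‖₊ : ℝ≥0∞) = ENNReal.ofReal (∫ x in X, T t x y) := by
        rw [ofReal_integral_eq_lintegral_ofReal (hker_intx t ht y hy) ?_]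
        · refine lintegral_congr_ae ?_
          filter_upwards [ae_restrict_mem hXmeas] with x hx
          rw [← enorm_eq_nnnorm, Real.enorm_eq_ofReal (hA0' t ht x hx y hy).1]
        · filter_upwards [ae_restrict_mem hXmeas] with x hx
          exact (hA0' t ht x hx y hy).1
      rw [e1]
      exact ENNReal.ofReal_le_ofReal (hker_boundx t ht y hy)
    have swap : ∫⁻ x in X, ∫⁻ y in X, (‖T t x y * g y‖₊ : ℝ≥0∞)
        = ∫⁻ y in X, ∫⁻ x in X, (‖T t x y * g y‖₊ : ℝ≥0∞) :=
      lintegral_lintegral_swap hFm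
    have hfin : ∫⁻ y in X, ∫⁻ x in X, (‖T t x y * g y‖₊ : ℝ≥0∞)
        ≤ ENNReal.ofReal (C₀ * K) * ∫⁻ y in X, (‖g y‖₊ : ℝ≥0∞) := by
      rw [← lintegral_const_mul' _ _ ENNReal.ofReal_ne_top]
      refine lintegral_mono_ae ?_
      filter_upwards [ae_restrict_mem hXmeas] with y hy
      calc ∫⁻ x in X, (‖T t x y * g y‖₊ : ℝ≥0∞)
          = ∫⁻ x in X, (‖T t x y‖₊ : ℝ≥0∞) * (‖g y‖₊ : ℝ≥0∞) := by
            apply lintegral_congr fun x => ?_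
            rw [nnnorm_mul, ENNReal.coe_mul]
        _ = (∫⁻ x in X, (‖T t x y‖₊ : ℝ≥0∞)) * (‖g y‖₊ : ℝ≥0∞) :=
            lintegral_mul_const' _ _ ENNReal.coe_ne_top
        _ ≤ ENNReal.ofReal (C₀ * K) * (‖g y‖₊ : ℝ≥0∞) :=
            mul_le_mul_left (hinner y hy) _
    constructor
    · have hfin2 : ∫⁻ x in X, ∫⁻ y in X, (‖T t x y * g y‖₊ : ℝ≥0∞) < ∞ := by
        rw [swap]
        refine lt_of_le_of_lt hfin ?_
        exact ENNReal.mul_lt_top ENNReal.ofReal_lt_top hgint.2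
      have := ae_lt_top' (by
          exact (Measurable.lintegral_prod_right'
            (((hTm2 t).mul (hg.comp measurable_snd)).nnnorm.coe_nnreal_ennreal)).aemeasurable) hfin2.ne
      filter_upwards [this] with x hx
      refine ⟨((hTm t x).mul hg).aestronglyMeasurable, ?_⟩
      simpa [HasFiniteIntegral, enorm_eq_nnnorm] using hx
    · calc ∫⁻ x in X, (‖∫ y in X, T t x y * g y‖₊ : ℝ≥0∞)
          ≤ ∫⁻ x in X, ∫⁻ y in X, (‖T t x y * g y‖₊ : ℝ≥0∞) :=
            lintegral_mono fun x => enorm_integral_le_lintegral_enorm _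
        _ = ∫⁻ y in X, ∫⁻ x in X, (‖T t x y * g y‖₊ : ℝ≥0∞) := swap
        _ ≤ ENNReal.ofReal (C₀ * K) * ∫⁻ y in X, (‖g y‖₊ : ℝ≥0∞) := hfin
  -- truncations of f₁
  have hbmeas : ∀ N : ℕ, Measurable fun x => trunc (N:ℝ) (f₁ x) := fun N => trunc_meas hm₁ _
  have hbint' : ∀ N : ℕ, IntegrableOn (fun x => trunc (N:ℝ) (f₁ x)) X volume := fun N =>
    hf₁.abs.mono' (hbmeas N).aestronglyMeasurable (ae_of_all _ fun x => by
      rw [Real.norm_eq_abs]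
      exact trunc_abs_le_abs _ _ (Nat.cast_nonneg N))
  have hrmeas : ∀ N : ℕ, Measurable fun x => f₁ x - trunc (N:ℝ) (f₁ x) := fun N =>
    hm₁.sub (hbmeas N)
  have hrint : ∀ N : ℕ, IntegrableOn (fun x => f₁ x - trunc (N:ℝ) (f₁ x)) X volume :=
    fun N => hf₁.sub (hbint' N)
  have habs_sub : ∀ (N : ℕ) (x : Rd d), |f₁ x - trunc (N:ℝ) (f₁ x)| ≤ 2 * |f₁ x| := by
    intro N x
    have h1 := abs_add_le (f₁ x) (-(trunc (N:ℝ) (f₁ x)))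
    rw [abs_neg] at h1
    have h2 := trunc_abs_le_abs (N:ℝ) (f₁ x) (Nat.cast_nonneg N)
    rw [sub_eq_add_neg]
    linarith
  have hεtend : Tendsto (fun N : ℕ => ∫ x in X, |f₁ x - trunc (N:ℝ) (f₁ x)|) atTop
      (nhds 0) := by
    have h0 : (0:ℝ) = ∫ _x in X, (0:ℝ) := by simp
    rw [h0]
    refine tendsto_integral_of_dominated_convergence (fun x => 2 * |f₁ x|)
      (fun N => ((hrmeas N).abs).aestronglyMeasurable) (hf₁.abs.const_mul 2) ?_ ?_
    · intro N
      refine ae_of_all _ fun x => ?_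
      rw [Real.norm_eq_abs, abs_abs]
      exact habs_sub N x
    · refine ae_of_all _ fun x => ?_
      have hev : ∀ᶠ N : ℕ in atTop, |f₁ x - trunc (N:ℝ) (f₁ x)| = 0 := by
        obtain ⟨N₀, hN₀⟩ := exists_nat_ge |f₁ x|
        refine eventually_atTop.mpr ⟨N₀, fun N hN => ?_⟩
        rw [trunc_eq_self (hN₀.trans (by exact_mod_cast hN))]
        simp
      exact Tendsto.congr' (hev.mono fun N h => h.symm) tendsto_const_nhds
  have hNex : ∀ n : ℕ, ∃ N : ℕ, n ≤ N ∧
      ∫ x in X, |f₁ x - trunc (N:ℝ) (f₁ x)| ≤ (2⁻¹)^n / (C₀*K + 1) := by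
    intro n
    have hpos : 0 < (2⁻¹:ℝ)^n / (C₀*K+1) := by positivity
    have h1 := hεtend.eventually_lt_const hpos
    exact (((eventually_ge_atTop n).and h1).exists).imp fun N h => ⟨h.1, h.2.le⟩
  set Nn : ℕ → ℕ := fun n => (hNex n).choose with hNndef
  have hNn1 : ∀ n, n ≤ Nn n := fun n => (hNex n).choose_spec.1
  have hNn2 : ∀ n, ∫ x in X, |f₁ x - trunc (Nn n : ℝ) (f₁ x)| ≤ (2⁻¹)^n / (C₀*K+1) :=
    fun n => (hNex n).choose_spec.2
  set bfun : ℕ → Rd d → ℝ := fun n x => trunc (Nn n : ℝ) (f₁ x) with hbfun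
  set rfun : ℕ → Rd d → ℝ := fun n x => f₁ x - bfun n x with hrfun
  -- bfun is in L²
  have hbℒp : ∀ n, MemLp (bfun n) 2 (volume.restrict X) := by
    intro n
    refine ⟨(hbmeas (Nn n)).aestronglyMeasurable, ?_⟩
    rw [eLpNorm_eq_lintegral_rpow_enorm_toReal (by norm_num) (by norm_num)]
    simp only [ENNReal.toReal_ofNat]
    refine ENNReal.rpow_lt_top_of_nonneg (by norm_num) (LT.lt.ne ?_)
    have hb : ∀ x, (‖bfun n x‖₊ : ℝ≥0∞) ^ (2:ℝ)
        ≤ ENNReal.ofReal (Nn n) * (‖f₁ x‖₊ : ℝ≥0∞) := by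
      intro x
      have e : ((‖bfun n x‖₊ : ℝ≥0∞)) ^ (2:ℝ)
          = (‖bfun n x‖₊ : ℝ≥0∞) * (‖bfun n x‖₊ : ℝ≥0∞) := by
        rw [show (2:ℝ) = ((2:ℕ):ℝ) by norm_num, ENNReal.rpow_natCast, pow_two]
      rw [e]
      refine mul_le_mul' ?_ ?_
      · rw [← enorm_eq_nnnorm, Real.enorm_eq_ofReal_abs]
        exact ENNReal.ofReal_le_ofReal (trunc_abs_le _ _ (Nat.cast_nonneg _))
      · rw [← enorm_eq_nnnorm, ← enorm_eq_nnnorm, Real.enorm_eq_ofReal_abs, Real.enorm_eq_ofReal_abs]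
        exact ENNReal.ofReal_le_ofReal (trunc_abs_le_abs _ _ (Nat.cast_nonneg _))
    calc ∫⁻ x in X, (‖bfun n x‖₊ : ℝ≥0∞)^(2:ℝ)
        ≤ ∫⁻ x in X, ENNReal.ofReal (Nn n) * (‖f₁ x‖₊ : ℝ≥0∞) := lintegral_mono hb
      _ = ENNReal.ofReal (Nn n) * ∫⁻ x in X, (‖f₁ x‖₊ : ℝ≥0∞) :=
          lintegral_const_mul' _ _ ENNReal.ofReal_ne_top
      _ < ∞ := ENNReal.mul_lt_top ENNReal.ofReal_lt_top hf₁.2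
  -- localized bounded parts of f₂
  set hfun : ℕ → Rd d → ℝ :=
    fun m => (closedBall (0:Rd d) (2*((m:ℝ)+1))).indicator f₂ with hhfun
  have hhmeas : ∀ m, Measurable (hfun m) := fun m => hm₂.indicator measurableSet_closedBall
  have hhabs : ∀ (m : ℕ) (y : Rd d), |hfun m y| ≤ M := by
    intro m y
    by_cases hy : y ∈ closedBall (0:Rd d) (2*((m:ℝ)+1))
    · simp only [hhfun, Set.indicator_of_mem hy]; exact hM y
    · simp only [hhfun, Set.indicator_of_notMem hy, abs_zero]; exact hM0
  have hhℒp : ∀ m, MemLp (hfun m) 2 (volume.restrict X) := by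
    intro m
    refine ⟨(hhmeas m).aestronglyMeasurable, ?_⟩
    rw [eLpNorm_eq_lintegral_rpow_enorm_toReal (by norm_num) (by norm_num)]
    simp only [ENNReal.toReal_ofNat]
    refine ENNReal.rpow_lt_top_of_nonneg (by norm_num) (LT.lt.ne ?_)
    have hb : ∀ x, (‖hfun m x‖₊ : ℝ≥0∞)^(2:ℝ)
        ≤ (closedBall (0:Rd d) (2*((m:ℝ)+1))).indicator
            (fun _ => ENNReal.ofReal M ^ 2) x := by
      intro x
      by_cases hx : x ∈ closedBall (0:Rd d) (2*((m:ℝ)+1))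
      · rw [Set.indicator_of_mem hx,
          show (2:ℝ) = ((2:ℕ):ℝ) by norm_num, ENNReal.rpow_natCast]
        refine pow_le_pow_left' ?_ 2
        rw [← enorm_eq_nnnorm, Real.enorm_eq_ofReal_abs]
        exact ENNReal.ofReal_le_ofReal (hhabs m x)
      · rw [Set.indicator_of_notMem hx]
        have h0 : hfun m x = 0 := by
          rw [hhfun]; exact Set.indicator_of_notMem hx f₂
        rw [h0]
        simp [ENNReal.zero_rpow_of_pos (by norm_num : (0:ℝ) < 2)]
    calc ∫⁻ x in X, (‖hfun m x‖₊ : ℝ≥0∞)^(2:ℝ)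
        ≤ ∫⁻ x in X, (closedBall (0:Rd d) (2*((m:ℝ)+1))).indicator
            (fun _ => ENNReal.ofReal M ^ 2) x := lintegral_mono hb
      _ ≤ ∫⁻ x, (closedBall (0:Rd d) (2*((m:ℝ)+1))).indicator
            (fun _ => ENNReal.ofReal M ^ 2) x := setLIntegral_le_lintegral _ _
      _ = ENNReal.ofReal M ^ 2 * volume (closedBall (0:Rd d) (2*((m:ℝ)+1))) :=
          lintegral_indicator_const measurableSet_closedBall _
      _ < ∞ := ENNReal.mul_lt_top
          (ENNReal.pow_lt_top ENNReal.ofReal_lt_top) measure_closedBall_lt_top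
  set ffun : ℕ → Rd d → ℝ := fun m y => f₂ y - hfun m y with hffun
  have hfmeas : ∀ m, Measurable (ffun m) := fun m => hm₂.sub (hhmeas m)
  have hfabs : ∀ (m : ℕ) (y : Rd d), |ffun m y| ≤ M := by
    intro m y
    by_cases hy : y ∈ closedBall (0:Rd d) (2*((m:ℝ)+1))
    · simp only [hffun, hhfun, Set.indicator_of_mem hy, sub_self, abs_zero]; exact hM0
    · simp only [hffun, hhfun, Set.indicator_of_notMem hy, sub_zero]; exact hM y
  have hfar0 : ∀ (m : ℕ) (y : Rd d), y ∈ closedBall (0:Rd d) (2*((m:ℝ)+1)) → ffun m y = 0 := by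
    intro m y hy
    simp only [hffun, hhfun, Set.indicator_of_mem hy, sub_self]
  -- far-field estimate
  have hfar : ∀ (m : ℕ) (x : Rd d), x ∈ X → ‖x‖ ≤ (m:ℝ)+1 → ∀ t, 0 < t →
      ‖∫ y in X, T t x y * ffun m y‖ ≤ M * C₀ * c₁ * t ^ ν := by
    intro m x hx hxm t ht
    have hint : IntegrableOn (fun y => T t x y * ffun m y) X volume :=
      hbint t ht x hx (ffun m) M (hfmeas m) (hfabs m)
    have hHint : IntegrableOn (fun y => M * (C₀ * t^ν) * Hfun d s (y - x)) X volume :=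
      ((Hshift_int hs2 hs0 x).const_mul _).integrableOn
    have hpt : ∀ y ∈ X, ‖T t x y * ffun m y‖ ≤ M * (C₀ * t^ν) * Hfun d s (y - x) := by
      intro y hy
      rw [Real.norm_eq_abs]
      by_cases hyb : y ∈ closedBall (0:Rd d) (2*((m:ℝ)+1))
      · rw [hfar0 m y hyb, mul_zero, abs_zero]
        exact mul_nonneg (mul_nonneg hM0 (by positivity)) (Hfun_nonneg _)
      · have hyn : 2*((m:ℝ)+1) < ‖y‖ := by
          simpa [mem_closedBall, dist_zero_right] using hyb
        have hdist : 1 ≤ dist x y := by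
          have h2 : ‖y‖ - ‖x‖ ≤ ‖y - x‖ := norm_sub_norm_le y x
          have h3 : dist x y = ‖y - x‖ := by rw [dist_eq_norm, norm_sub_rev]
          have hm0 : (0:ℝ) ≤ m := Nat.cast_nonneg m
          rw [h3]; linarith
        obtain ⟨hTn, hT⟩ := hA0' t ht x hx y hy
        have hH := Hfun_ge (d := d) hs0 ht hdist
        have hnorm : (t + ‖y - x‖^2)^(-s) = (t + dist x y ^2)^(-s) := by
          rw [dist_eq_norm, norm_sub_rev]
        rw [abs_mul, abs_of_nonneg hTn]
        calc T t x y * |ffun m y| ≤ (C₀ * t^ν * (t + ‖y - x‖^2)^(-s)) * M := by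
              refine mul_le_mul hT (hfabs m y) (abs_nonneg _) (by positivity)
          _ = M * (C₀ * t^ν) * (t + dist x y^2)^(-s) := by rw [← hnorm]; ring
          _ ≤ M * (C₀ * t^ν) * Hfun d s (y - x) :=
              mul_le_mul_of_nonneg_left hH (mul_nonneg hM0 (by positivity))
    calc ‖∫ y in X, T t x y * ffun m y‖ ≤ ∫ y in X, ‖T t x y * ffun m y‖ :=
          norm_integral_le_integral_norm _
      _ ≤ ∫ y in X, M * (C₀ * t^ν) * Hfun d s (y - x) :=
          setIntegral_mono_on hint.norm hHint hXmeas hpt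
      _ = M * (C₀ * t^ν) * ∫ y in X, Hfun d s (y - x) := integral_const_mul _ _
      _ ≤ M * (C₀ * t^ν) * ∫ y : Rd d, Hfun d s (y - x) := by
          refine mul_le_mul_of_nonneg_left ?_ (mul_nonneg hM0 (by positivity))
          exact setIntegral_le_integral (Hshift_int hs2 hs0 x)
            (ae_of_all _ fun y => Hfun_nonneg _)
      _ = M * C₀ * c₁ * t ^ ν := by rw [Hshift_integral x, ← hc₁def]; ring
  -- choice of the time sequence
  have hq : ∀ n : ℕ, ∃ t : ℝ, 0 < t ∧ t < 1/((n:ℝ)+1) ∧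
      (∀ m ∈ Iic n, eLpNorm (fun x => (∫ y in X, T t x y * hfun m y) - hfun m x) 2
        (volume.restrict X) ≤ ENNReal.ofReal ((2:ℝ)⁻¹^n)) ∧
      eLpNorm (fun x => (∫ y in X, T t x y * bfun n y) - bfun n x) 2
        (volume.restrict X) ≤ ENNReal.ofReal ((2:ℝ)⁻¹^n) := by
    intro n
    have hδ : (0:ℝ≥0∞) < ENNReal.ofReal ((2:ℝ)⁻¹^n) := by
      rw [ENNReal.ofReal_pos]; positivity
    have e1 : ∀ᶠ t in nhdsWithin 0 (Ioi 0), ∀ m ∈ Iic n,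
        eLpNorm (fun x => (∫ y in X, T t x y * hfun m y) - hfun m x) 2
          (volume.restrict X) ≤ ENNReal.ofReal ((2:ℝ)⁻¹^n) := by
      refine (eventually_all_finite (finite_Iic n)).mpr fun m _ => ?_
      exact ((hcont (hfun m) (hhℒp m)).eventually_lt_const hδ).mono fun t h => h.le
    have e2 := ((hcont (bfun n) (hbℒp n)).eventually_lt_const hδ).mono
      fun t (h : _ < _) => h.le
    have e3 : ∀ᶠ t : ℝ in nhdsWithin 0 (Ioi 0), 0 < t := eventually_mem_nhdsWithin
    have e4 : ∀ᶠ t : ℝ in nhdsWithin 0 (Ioi 0), t < 1/((n:ℝ)+1) :=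
      eventually_nhdsWithin_of_eventually_nhds
        (eventually_lt_nhds (by positivity : (0:ℝ) < 1/((n:ℝ)+1)))
    obtain ⟨t, ht⟩ := ((e3.and e4).and (e1.and e2)).exists
    exact ⟨t, ht.1.1, ht.1.2, ht.2.1, ht.2.2⟩
  choose tseq htpos htlt hcondH hcondB using hq
  have htseq0 : Tendsto tseq atTop (nhds 0) :=
    tendsto_of_tendsto_of_tendsto_of_le_of_le tendsto_const_nhds
      tendsto_one_div_add_atTop_nhds_zero_nat (fun n => (htpos n).le) (fun n => (htlt n).le)
  have htν : Tendsto (fun n => (tseq n) ^ ν) atTop (nhds 0) := by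
    have hc := (Real.continuousAt_rpow_const 0 ν (Or.inr hν0.le)).tendsto.comp htseq0
    simpa [Function.comp_def, Real.zero_rpow hν0.ne'] using hc
  -- geometric facts
  have hofr : ∀ n : ℕ, ENNReal.ofReal ((2:ℝ)⁻¹^n) = (ENNReal.ofReal 2⁻¹)^n := fun n =>
    ENNReal.ofReal_pow (by norm_num) n
  have hqle1 : ENNReal.ofReal 2⁻¹ ≤ 1 := by
    rw [ENNReal.ofReal_le_one]; norm_num
  have hgeo : ∑' n : ℕ, (ENNReal.ofReal 2⁻¹)^n ≠ ∞ := by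
    rw [ENNReal.tsum_geometric]
    refine ENNReal.inv_ne_top.mpr ?_
    have hlt : ENNReal.ofReal 2⁻¹ < 1 := by rw [ENNReal.ofReal_lt_one]; norm_num
    exact (tsub_pos_of_lt hlt).ne'
  have hsq_le : ∀ k : ℕ, ((ENNReal.ofReal 2⁻¹)^k) ^ (2:ℝ) ≤ (ENNReal.ofReal 2⁻¹)^k := by
    intro k
    have e : ((ENNReal.ofReal 2⁻¹)^k) ^ (2:ℝ)
        = ((ENNReal.ofReal 2⁻¹)^k) * ((ENNReal.ofReal 2⁻¹)^k) := by
      rw [show (2:ℝ) = ((2:ℕ):ℝ) by norm_num, ENNReal.rpow_natCast, pow_two]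
    rw [e]
    exact mul_le_of_le_one_left' (pow_le_one' hqle1 k)
  -- a.e. convergence of the truncated bounded part
  have hE1 : ∀ᵐ x ∂volume.restrict X,
      Tendsto (fun n => (∫ y in X, T (tseq n) x y * bfun n y) - bfun n x) atTop (nhds 0) := by
    refine bc2 _ (fun n => ((hIm (tseq n) (bfun n)
      (hbmeas (Nn n))).measurable.sub (hbmeas (Nn n))).aemeasurable) ?_
    refine ne_top_of_le_ne_top hgeo (ENNReal.tsum_le_tsum fun n => ?_)
    refine (lint_sq_le (hcondB n)).trans ?_
    rw [hofr n]
    exact hsq_le n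
  -- a.e. convergence of the small L¹ part
  have hrmeas' : ∀ n, Measurable (rfun n) := fun n => by
    simp only [hrfun, hbfun]; exact hrmeas (Nn n)
  have hrint' : ∀ n, IntegrableOn (rfun n) X volume := fun n => by
    simp only [hrfun, hbfun]; exact hrint (Nn n)
  have hE2 : ∀ᵐ x ∂volume.restrict X,
      Tendsto (fun n => ∫ y in X, T (tseq n) x y * rfun n y) atTop (nhds 0) := by
    refine bc1 _ (fun n => (hIm (tseq n) (rfun n) (hrmeas' n)).measurable.aemeasurable) ?_
    refine ne_top_of_le_ne_top hgeo (ENNReal.tsum_le_tsum fun n => ?_)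
    refine ((hL1 (tseq n) (htpos n) (rfun n) (hrmeas' n) (hrint' n)).2).trans ?_
    have hr : ∫⁻ y in X, (‖rfun n y‖₊ : ℝ≥0∞) = ENNReal.ofReal (∫ y in X, |rfun n y|) := by
      rw [ofReal_integral_eq_lintegral_ofReal (hrint' n).abs
        (ae_of_all _ fun y => abs_nonneg _)]
      exact lintegral_congr fun y => by rw [← enorm_eq_nnnorm, Real.enorm_eq_ofReal_abs]
    rw [hr, ← ENNReal.ofReal_mul (by positivity : (0:ℝ) ≤ C₀*K), ← hofr n]
    apply ENNReal.ofReal_le_ofReal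
    have h2 : ∫ y in X, |rfun n y| ≤ (2⁻¹)^n / (C₀*K+1) := by
      have := hNn2 n
      simpa only [hrfun, hbfun] using this
    have hCK : (0:ℝ) ≤ C₀*K := by positivity
    have hdiv : C₀*K/(C₀*K+1) ≤ 1 := by
      rw [div_le_one (by positivity)]; linarith
    calc C₀*K * ∫ y in X, |rfun n y| ≤ C₀*K * ((2⁻¹)^n / (C₀*K+1)) :=
          mul_le_mul_of_nonneg_left h2 hCK
      _ = (2⁻¹)^n * (C₀*K/(C₀*K+1)) := by ring
      _ ≤ (2⁻¹)^n * 1 := mul_le_mul_of_nonneg_left hdiv (by positivity)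
      _ = (2⁻¹)^n := mul_one _
  -- a.e. convergence of the localized bounded parts
  have hE3 : ∀ᵐ x ∂volume.restrict X, ∀ m : ℕ,
      Tendsto (fun n => (∫ y in X, T (tseq n) x y * hfun m y) - hfun m x) atTop (nhds 0) := by
    rw [ae_all_iff]
    intro m
    have hsh : ∀ᵐ x ∂volume.restrict X,
        Tendsto (fun n => (∫ y in X, T (tseq (n+m)) x y * hfun m y) - hfun m x)
          atTop (nhds 0) := by
      refine bc2 _ (fun n => ((hIm (tseq (n+m)) (hfun m)
        (hhmeas m)).measurable.sub (hhmeas m)).aemeasurable) ?_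
      refine ne_top_of_le_ne_top hgeo (ENNReal.tsum_le_tsum fun n => ?_)
      have hc := hcondH (n+m) m (mem_Iic.mpr le_add_self)
      refine (lint_sq_le hc).trans ?_
      rw [hofr (n+m)]
      refine (hsq_le (n+m)).trans ?_
      exact pow_le_pow_right_of_le_one' hqle1 (Nat.le_add_right n m)
    filter_upwards [hsh] with x hx
    exact (tendsto_add_atTop_iff_nat m).mp hx
  -- a.e. integrability of the small parts
  have hE4 : ∀ᵐ x ∂volume.restrict X, ∀ n : ℕ,
      IntegrableOn (fun y => T (tseq n) x y * rfun n y) X volume := by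
    rw [ae_all_iff]
    intro n
    exact (hL1 (tseq n) (htpos n) (rfun n) (hrmeas' n) (hrint' n)).1
  -- assembly
  refine ⟨tseq, htpos, htseq0, ?_⟩
  filter_upwards [hE1, hE2, hE3, hE4, ae_restrict_mem hXmeas] with x h1 h2 h3 h4 hx
  obtain ⟨m, hm⟩ := exists_nat_ge ‖x‖
  have hxm : ‖x‖ ≤ (m:ℝ)+1 := hm.trans (by linarith)
  have hxball : x ∈ closedBall (0:Rd d) (2*((m:ℝ)+1)) := by
    rw [mem_closedBall, dist_zero_right]
    have : (0:ℝ) ≤ m := Nat.cast_nonneg m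
    linarith
  have hhx : hfun m x = f₂ x := by
    simp only [hhfun]; exact Set.indicator_of_mem hxball f₂
  have hdec : ∀ n, ∫ y in X, T (tseq n) x y * (f₁ + f₂) y
      = (((∫ y in X, T (tseq n) x y * bfun n y) - bfun n x)
        + ((∫ y in X, T (tseq n) x y * rfun n y) - rfun n x)
        + ((∫ y in X, T (tseq n) x y * hfun m y) - hfun m x)
        + (∫ y in X, T (tseq n) x y * ffun m y)) + (f₁ + f₂) x := by
    intro n
    have ib : IntegrableOn (fun y => T (tseq n) x y * bfun n y) X volume :=
      hbint _ (htpos n) x hx (bfun n) (Nn n) (by simp only [hbfun]; exact hbmeas (Nn n))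
        (fun y => by simp only [hbfun]; exact trunc_abs_le _ _ (Nat.cast_nonneg _))
    have ir : IntegrableOn (fun y => T (tseq n) x y * rfun n y) X volume := h4 n
    have ih : IntegrableOn (fun y => T (tseq n) x y * hfun m y) X volume :=
      hbint _ (htpos n) x hx (hfun m) M (hhmeas m) (hhabs m)
    have ifa : IntegrableOn (fun y => T (tseq n) x y * ffun m y) X volume :=
      hbint _ (htpos n) x hx (ffun m) M (hfmeas m) (hfabs m)
    have e0 : ∀ y, T (tseq n) x y * (f₁ + f₂) y
        = ((fun y => T (tseq n) x y * bfun n y) + fun y => T (tseq n) x y * rfun n y) y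
          + ((fun y => T (tseq n) x y * hfun m y) + fun y => T (tseq n) x y * ffun m y) y := by
      intro y
      simp only [Pi.add_apply, hrfun, hffun]
      ring
    rw [integral_congr_ae (ae_of_all _ e0), integral_add (ib.add ir) (ih.add ifa)]
    simp only [Pi.add_apply]
    rw [integral_add ib ir, integral_add ih ifa]
    have hfx : bfun n x + rfun n x = f₁ x := by simp only [hrfun]; ring
    linarith [hfx, hhx]
  have hrx0 : Tendsto (fun n => rfun n x) atTop (nhds 0) := by
    obtain ⟨N₀, hN₀⟩ := exists_nat_ge |f₁ x|
    have hev : ∀ᶠ n : ℕ in atTop, rfun n x = 0 := by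
      refine eventually_atTop.mpr ⟨N₀, fun n hn => ?_⟩
      have hle : |f₁ x| ≤ (Nn n : ℝ) := hN₀.trans (by exact_mod_cast hn.trans (hNn1 n))
      simp only [hrfun, hbfun, trunc_eq_self hle, sub_self]
    exact Tendsto.congr' (hev.mono fun n h => h.symm) tendsto_const_nhds
  have hD : Tendsto (fun n => ∫ y in X, T (tseq n) x y * ffun m y) atTop (nhds 0) := by
    refine squeeze_zero_norm (fun n => hfar m x hx hxm (tseq n) (htpos n)) ?_
    have := htν.const_mul (M*C₀*c₁)
    simpa [mul_comm] using this
  have hfinal := ((h1.add (h2.sub hrx0)).add (h3 m)).add hD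
  have htotal : Tendsto (fun n =>
      ((∫ y in X, T (tseq n) x y * bfun n y) - bfun n x)
        + ((∫ y in X, T (tseq n) x y * rfun n y) - rfun n x)
        + ((∫ y in X, T (tseq n) x y * hfun m y) - hfun m x)
        + (∫ y in X, T (tseq n) x y * ffun m y)) atTop (nhds 0) := by
    have h0 : ((((0:ℝ) + ((0:ℝ) - 0)) + 0) + 0) = 0 := by norm_num
    rw [← h0]
    exact hfinal
  have hlast := htotal.add_const ((f₁ + f₂) x)
  rw [zero_add] at hlast
  exact hlast.congr fun n => (hdec n).symm

/-- If a kernel `T` on a measurable `X ⊆ ℝ^d` satisfies the (A₀′) upper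
bound and is strongly continuous on `L²(X)` at `t = 0⁺`, then for every
`f ∈ L¹(X) + L^∞(X)` there is a sequence `t_n → 0⁺` with `T_{t_n} f(x) → f(x)` for a.e.
`x ∈ X`. -/
theorem stmt17
    {d : ℕ} {X : Set (Rd d)} (hXmeas : MeasurableSet X)
    (T : ℝ → Rd d → Rd d → ℝ)
    (hTmeas : Measurable fun p : ℝ × Rd d × Rd d => T p.1 p.2.1 p.2.2)
    (C₀ ν : ℝ) (hC₀ : 0 < C₀) (hν : ν ∈ Set.Ioo (0 : ℝ) 1)
    -- (i)
    (hA0 : ∀ t > 0, ∀ x ∈ X, ∀ y ∈ X,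
      0 ≤ T t x y ∧ T t x y ≤ C₀ * t ^ ν * (t + dist x y ^ 2) ^ (-(d : ℝ) / 2 - ν))
    -- (ii) strong continuity on L²(X) as t → 0⁺
    (hcont : ∀ g : Rd d → ℝ, MemLp g 2 (volume.restrict X) →
      Tendsto (fun t => eLpNorm (fun x => (∫ y in X, T t x y * g y) - g x) 2
          (volume.restrict X))
        (nhdsWithin 0 (Set.Ioi 0)) (nhds 0))
    -- f ∈ L¹(X) + L^∞(X)
    (f f₁ f₂ : Rd d → ℝ) (hf₁ : IntegrableOn f₁ X volume)
    (hf₂ : MemLp f₂ ⊤ (volume.restrict X)) (hf : f = f₁ + f₂) :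
    ∃ tseq : ℕ → ℝ, (∀ n, 0 < tseq n) ∧ Tendsto tseq atTop (nhds 0) ∧
      ∀ᵐ x ∂volume.restrict X,
        Tendsto (fun n => ∫ y in X, T (tseq n) x y * f y) atTop (nhds (f x)) := by
  -- measurable representative of f₁
  have h1 := hf₁.1
  set f₁' : Rd d → ℝ := h1.mk f₁ with hf₁'def
  have hm₁ : Measurable f₁' := h1.stronglyMeasurable_mk.measurable
  have heq₁ : f₁ =ᵐ[volume.restrict X] f₁' := h1.ae_eq_mk
  have hf₁' : IntegrableOn f₁' X volume := (integrable_congr heq₁).mp hf₁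
  -- a.e. bound for f₂
  set M : ℝ := (eLpNorm f₂ ⊤ (volume.restrict X)).toReal with hMdef
  have hM0 : 0 ≤ M := ENNReal.toReal_nonneg
  have hMae : ∀ᵐ x ∂volume.restrict X, |f₂ x| ≤ M := by
    have h := ae_le_eLpNormEssSup (f := f₂) (μ := volume.restrict X)
    have hlt : eLpNormEssSup f₂ (volume.restrict X) < ⊤ := by
      have h2 := hf₂.2
      rwa [eLpNorm_exponent_top] at h2
    filter_upwards [h] with x hx
    have h3 : ((‖f₂ x‖₊ : ℝ≥0∞)).toReal ≤ (eLpNormEssSup f₂ (volume.restrict X)).toReal :=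
      ENNReal.toReal_mono hlt.ne hx
    simpa [hMdef, eLpNorm_exponent_top, Real.norm_eq_abs] using h3
  -- bounded measurable representative of f₂
  set f₂0 : Rd d → ℝ := hf₂.1.mk f₂ with hf₂0def
  have hm₂0 : Measurable f₂0 := hf₂.1.stronglyMeasurable_mk.measurable
  have heq₂0 : f₂ =ᵐ[volume.restrict X] f₂0 := hf₂.1.ae_eq_mk
  set f₂' : Rd d → ℝ := fun x => trunc M (f₂0 x) with hf₂'def
  have hm₂ : Measurable f₂' := trunc_meas hm₂0 M
  have hM' : ∀ x, |f₂' x| ≤ M := fun x => trunc_abs_le M (f₂0 x) hM0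
  have heq₂ : f₂ =ᵐ[volume.restrict X] f₂' := by
    filter_upwards [heq₂0, hMae] with x h e
    rw [hf₂'def]
    simp only
    rw [← h, trunc_eq_self e]
  obtain ⟨tseq, h1t, h2t, h3t⟩ := key hXmeas T hTmeas C₀ ν hC₀ hν hA0 hcont
    f₁' f₂' hm₁ hm₂ hf₁' M hM0 hM'
  refine ⟨tseq, h1t, h2t, ?_⟩
  have heqf : f =ᵐ[volume.restrict X] f₁' + f₂' := by
    rw [hf]
    filter_upwards [heq₁, heq₂] with x a b
    simp only [Pi.add_apply, a, b]
  have hint_eq : ∀ (t : ℝ) (x : Rd d),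
      ∫ y in X, T t x y * f y = ∫ y in X, T t x y * (f₁' + f₂') y := by
    intro t x
    refine integral_congr_ae ?_
    filter_upwards [heqf] with y hy
    rw [hy]
  filter_upwards [h3t, heqf] with x hx hfx
  rw [show f x = (f₁' + f₂') x from hfx]
  exact hx.congr fun n => (hint_eq (tseq n) x).symm
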